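/- For every fixed u ∈ ℝ with u ≥ 0, the map α ↦ G(α,u) is concave on (0,1), where G(α,u) = 2 − Φ(Φ⁻¹(1−α/2)+u) − Φ(Φ⁻¹(1−α/2)−u). -/

import Mathlib

open MeasureTheory ProbabilityTheory Filter Topology

/-- The standard normal CDF. -/
noncomputable def Phi (x : ℝ) : ℝ :=
  ∫ t in Set.Iic x, Real.exp (-t ^ 2 / 2) / Real.sqrt (2 * Real.pi)

/-- The inverse of the standard normal CDF (on `(0,1)`). -/
noncomputable def PhiInv : ℝ → ℝ := Function.invFun Phi

/-- The function `G(α, u)` of the paper. -/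
noncomputable def G (α u : ℝ) : ℝ :=
  2 - Phi (PhiInv (1 - α / 2) + u) - Phi (PhiInv (1 - α / 2) - u)

/-! ### Auxiliary facts about the standard normal density and CDF -/

/-- The standard normal density. -/
noncomputable def stdPhi (x : ℝ) : ℝ := Real.exp (-x ^ 2 / 2) / Real.sqrt (2 * Real.pi)

lemma stdPhi_pos (x : ℝ) : 0 < stdPhi x :=
  div_pos (Real.exp_pos _) (Real.sqrt_pos.2 (by positivity))

lemma stdPhi_cont : Continuous stdPhi := by
  unfold stdPhi; fun_prop

lemma stdPhi_eq (x : ℝ) : stdPhi x = Real.exp (-2⁻¹ * x ^ 2) / Real.sqrt (2 * Real.pi) := by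
  unfold stdPhi; congr 1; ring

lemma stdPhi_integrable : Integrable stdPhi := by
  have h := (integrable_exp_neg_mul_sq (by norm_num : (0:ℝ) < 2⁻¹)).div_const
    (Real.sqrt (2 * Real.pi))
  exact h.congr (Eventually.of_forall fun x => (stdPhi_eq x).symm)

lemma stdPhi_integral : ∫ x, stdPhi x = 1 := by
  simp_rw [stdPhi_eq]
  rw [integral_div, integral_gaussian]
  have h : Real.pi / 2⁻¹ = 2 * Real.pi := by ring
  rw [h, div_self (ne_of_gt (Real.sqrt_pos.2 (by positivity)))]

lemma Phi_def (x : ℝ) : Phi x = ∫ t in Set.Iic x, stdPhi t := rfl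

lemma Phi_eq (x : ℝ) : Phi x = Phi 0 + ∫ t in (0:ℝ)..x, stdPhi t := by
  rw [← intervalIntegral.integral_Iic_sub_Iic stdPhi_integrable.integrableOn
    stdPhi_integrable.integrableOn, Phi_def, Phi_def]
  ring

lemma hasDerivAt_Phi (x : ℝ) : HasDerivAt Phi (stdPhi x) x := by
  have h : HasDerivAt (fun y => Phi 0 + ∫ t in (0:ℝ)..y, stdPhi t) (stdPhi x) x :=
    ((stdPhi_cont.integral_hasStrictDerivAt 0 x).hasDerivAt).const_add _
  exact h.congr_of_eventuallyEq (Eventually.of_forall fun y => Phi_eq y)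

lemma Phi_strictMono : StrictMono Phi :=
  strictMono_of_deriv_pos fun x => by
    rw [(hasDerivAt_Phi x).deriv]; exact stdPhi_pos x

lemma Phi_cont : Continuous Phi :=
  continuous_iff_continuousAt.2 fun x => (hasDerivAt_Phi x).continuousAt

lemma Phi_add_Ioi (x : ℝ) : Phi x + ∫ t in Set.Ioi x, stdPhi t = 1 := by
  rw [Phi_def, intervalIntegral.integral_Iic_add_Ioi stdPhi_integrable.integrableOn
    stdPhi_integrable.integrableOn, stdPhi_integral]

lemma Phi_tendsto_atTop : Tendsto Phi atTop (𝓝 1) := by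
  have h : AECover (volume : Measure ℝ) atTop fun i : ℝ => Set.Iic i :=
    aecover_Iic tendsto_id
  have := h.integral_tendsto_of_countably_generated stdPhi_integrable
  rwa [stdPhi_integral] at this

lemma Phi_tendsto_atBot : Tendsto Phi atBot (𝓝 0) := by
  have h : AECover (volume : Measure ℝ) atBot fun i : ℝ => Set.Ioi i :=
    aecover_Ioi tendsto_id
  have h2 := h.integral_tendsto_of_countably_generated stdPhi_integrable
  rw [stdPhi_integral] at h2
  have hPhi : Phi = fun x => 1 - ∫ t in Set.Ioi x, stdPhi t :=
    funext fun x => by have := Phi_add_Ioi x; linarith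
  rw [hPhi]
  have h3 : Tendsto (fun _ : ℝ => (1:ℝ)) atBot (𝓝 1) := tendsto_const_nhds
  simpa using h3.sub h2

lemma Phi_pos (x : ℝ) : 0 < Phi x := by
  have h1 : 0 ≤ Phi (x - 1) := by
    refine le_of_tendsto Phi_tendsto_atBot ?_
    filter_upwards [eventually_le_atBot (x - 1)] with y hy
    exact Phi_strictMono.monotone hy
  exact lt_of_le_of_lt h1 (Phi_strictMono (by linarith))

lemma Phi_lt_one (x : ℝ) : Phi x < 1 := by
  have h1 : Phi (x + 1) ≤ 1 := by
    refine ge_of_tendsto Phi_tendsto_atTop ?_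
    filter_upwards [eventually_ge_atTop (x + 1)] with y hy
    exact Phi_strictMono.monotone hy
  exact lt_of_lt_of_le (Phi_strictMono (by linarith)) h1

lemma Phi_surj {y : ℝ} (hy : y ∈ Set.Ioo (0:ℝ) 1) : ∃ x, Phi x = y := by
  obtain ⟨a, ha⟩ : ∃ a, Phi a < y := (Phi_tendsto_atBot.eventually_lt_const hy.1).exists
  obtain ⟨b, hb⟩ : ∃ b, y < Phi b := (Phi_tendsto_atTop.eventually_const_lt hy.2).exists
  have hab : a ≤ b := le_of_lt (Phi_strictMono.lt_iff_lt.1 (ha.trans hb))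
  have := intermediate_value_Icc hab Phi_cont.continuousOn
  obtain ⟨x, _, hx⟩ := this ⟨ha.le, hb.le⟩
  exact ⟨x, hx⟩

lemma Phi_mem_Ioo (x : ℝ) : Phi x ∈ Set.Ioo (0:ℝ) 1 := ⟨Phi_pos x, Phi_lt_one x⟩

/-- `Phi` as a map into the subtype `Ioo 0 1`. -/
noncomputable def PhiIoo (x : ℝ) : Set.Ioo (0:ℝ) 1 := ⟨Phi x, Phi_mem_Ioo x⟩

lemma PhiIoo_strictMono : StrictMono PhiIoo := fun a b h => by
  simpa [PhiIoo, Subtype.mk_lt_mk] using Phi_strictMono h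

lemma PhiIoo_surj : Function.Surjective PhiIoo := by
  rintro ⟨y, hy⟩
  obtain ⟨x, hx⟩ := Phi_surj hy
  exact ⟨x, Subtype.ext hx⟩

/-- `Phi` as an order isomorphism `ℝ ≃o Ioo 0 1`. -/
noncomputable def PhiIso : ℝ ≃o Set.Ioo (0:ℝ) 1 :=
  StrictMono.orderIsoOfSurjective PhiIoo PhiIoo_strictMono PhiIoo_surj

lemma Phi_PhiInv {y : ℝ} (hy : y ∈ Set.Ioo (0:ℝ) 1) : Phi (PhiInv y) = y :=
  Function.invFun_eq (Phi_surj hy)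

lemma PhiInv_eq {y : ℝ} (hy : y ∈ Set.Ioo (0:ℝ) 1) : PhiInv y = PhiIso.symm ⟨y, hy⟩ := by
  apply Phi_strictMono.injective
  rw [Phi_PhiInv hy]
  have h : PhiIoo (PhiIso.symm ⟨y, hy⟩) = ⟨y, hy⟩ := by
    have := PhiIso.apply_symm_apply ⟨y, hy⟩
    rwa [show (PhiIso : ℝ → Set.Ioo (0:ℝ) 1) = PhiIoo from rfl] at this
  exact (congrArg Subtype.val h).symm

lemma PhiInv_continuousOn : ContinuousOn PhiInv (Set.Ioo (0:ℝ) 1) := by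
  rw [continuousOn_iff_continuous_restrict]
  have h : (Set.Ioo (0:ℝ) 1).domRestrict PhiInv = ⇑PhiIso.symm :=
    funext fun z => PhiInv_eq z.2
  rw [h]
  exact OrderIso.continuous _

lemma hasDerivAt_PhiInv {y : ℝ} (hy : y ∈ Set.Ioo (0:ℝ) 1) :
    HasDerivAt PhiInv (stdPhi (PhiInv y))⁻¹ y := by
  refine HasDerivAt.of_local_left_inverse
    (PhiInv_continuousOn.continuousAt (isOpen_Ioo.mem_nhds hy))
    (hasDerivAt_Phi (PhiInv y)) (ne_of_gt (stdPhi_pos _)) ?_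
  filter_upwards [isOpen_Ioo.mem_nhds hy] with z hz
  exact Phi_PhiInv hz

lemma Phi_zero : Phi 0 = 1 / 2 := by
  have h1 := Phi_add_Ioi 0
  have h2 : ∫ t in Set.Ioi (0:ℝ), stdPhi t = Phi 0 := by
    have hneg : (fun t => stdPhi (-t)) = stdPhi := funext fun t => by
      unfold stdPhi; rw [neg_sq]
    have h := integral_comp_neg_Ioi (0:ℝ) stdPhi
    rw [hneg, neg_zero] at h
    rw [Phi_def, ← h]
  rw [h2] at h1
  linarith

lemma PhiInv_pos {y : ℝ} (hy : y ∈ Set.Ioo (0:ℝ) 1) (hy2 : 1/2 < y) : 0 < PhiInv y := by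
  have := Phi_PhiInv hy
  have h : Phi 0 < Phi (PhiInv y) := by rw [Phi_zero, this]; exact hy2
  exact Phi_strictMono.lt_iff_lt.1 h

lemma PhiInv_le {y z : ℝ} (hy : y ∈ Set.Ioo (0:ℝ) 1) (hz : z ∈ Set.Ioo (0:ℝ) 1)
    (h : y ≤ z) : PhiInv y ≤ PhiInv z := by
  rcases eq_or_lt_of_le h with rfl | h
  · exact le_refl _
  · exact le_of_lt (Phi_strictMono.lt_iff_lt.1 (by rw [Phi_PhiInv hy, Phi_PhiInv hz]; exact h))

/-- For every fixed `u ≥ 0`, the map `α ↦ G(α,u)` is concave on `(0,1)`. -/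
theorem G_concaveOn (u : ℝ) (hu : 0 ≤ u) :
    ConcaveOn ℝ (Set.Ioo (0 : ℝ) 1) (fun α => G α u) := by
  set g : ℝ → ℝ := fun α => Real.exp (-u ^ 2 / 2) * Real.cosh (PhiInv (1 - α / 2) * u) with hgdef
  have hmem : ∀ α ∈ Set.Ioo (0:ℝ) 1, 1 - α / 2 ∈ Set.Ioo (0:ℝ) 1 := by
    rintro α ⟨h1, h2⟩
    constructor <;> [linarith; linarith]
  have key : ∀ α ∈ Set.Ioo (0:ℝ) 1, HasDerivAt (fun α => G α u) (g α) α := by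
    intro α hα
    have hm := hmem α hα
    set q := PhiInv (1 - α / 2) with hq
    have hqd : HasDerivAt (fun α : ℝ => PhiInv (1 - α / 2)) ((stdPhi q)⁻¹ * (-(1/2))) α := by
      have h1 : HasDerivAt (fun α : ℝ => 1 - α / 2) (-(1/2)) α := by
        simpa using ((hasDerivAt_id α).div_const 2).const_sub 1
      exact (hasDerivAt_PhiInv hm).comp α h1
    have hA : HasDerivAt (fun α : ℝ => Phi (PhiInv (1 - α / 2) + u))
        (stdPhi (q + u) * ((stdPhi q)⁻¹ * (-(1/2)))) α :=
      (hasDerivAt_Phi (q + u)).comp (h₂ := Phi) α (hqd.add_const u)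
    have hB : HasDerivAt (fun α : ℝ => Phi (PhiInv (1 - α / 2) - u))
        (stdPhi (q - u) * ((stdPhi q)⁻¹ * (-(1/2)))) α :=
      (hasDerivAt_Phi (q - u)).comp (h₂ := Phi) α (hqd.sub_const u)
    have hG : HasDerivAt (fun α => G α u)
        (0 - stdPhi (q + u) * ((stdPhi q)⁻¹ * (-(1/2)))
          - stdPhi (q - u) * ((stdPhi q)⁻¹ * (-(1/2)))) α := by
      exact ((hasDerivAt_const α (2:ℝ)).sub hA).sub hB
    convert hG using 1
    -- arithmetic identity
    have hc : Real.sqrt (2 * Real.pi) ≠ 0 := ne_of_gt (Real.sqrt_pos.2 (by positivity))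
    have e1 : Real.exp (-(q + u) ^ 2 / 2)
        = Real.exp (-q ^ 2 / 2) * Real.exp (-u ^ 2 / 2) * Real.exp (-(q * u)) := by
      rw [← Real.exp_add, ← Real.exp_add]; congr 1; ring
    have e2 : Real.exp (-(q - u) ^ 2 / 2)
        = Real.exp (-q ^ 2 / 2) * Real.exp (-u ^ 2 / 2) * Real.exp (q * u) := by
      rw [← Real.exp_add, ← Real.exp_add]; congr 1; ring
    have hE : Real.exp (-q ^ 2 / 2) ≠ 0 := Real.exp_ne_zero _
    simp only [hgdef, ← hq]
    unfold stdPhi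
    rw [Real.cosh_eq, e1, e2]
    field_simp
    ring
  refine AntitoneOn.concaveOn_of_deriv (convex_Ioo 0 1) ?_ ?_ ?_
  · intro α hα
    exact (key α hα).continuousAt.continuousWithinAt
  · rw [interior_Ioo]
    intro α hα
    exact (key α hα).differentiableAt.differentiableWithinAt
  · rw [interior_Ioo]
    intro a ha b hb hab
    rw [(key a ha).deriv, (key b hb).deriv]
    apply mul_le_mul_of_nonneg_left _ (Real.exp_nonneg _)
    rw [Real.cosh_le_cosh]
    have hqa : 0 < PhiInv (1 - a / 2) := PhiInv_pos (hmem a ha) (by linarith [ha.1, ha.2])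
    have hqb : 0 < PhiInv (1 - b / 2) := PhiInv_pos (hmem b hb) (by linarith [hb.1, hb.2])
    have hle : PhiInv (1 - b / 2) ≤ PhiInv (1 - a / 2) :=
      PhiInv_le (hmem b hb) (hmem a ha) (by linarith)
    rw [abs_of_nonneg (mul_nonneg hqb.le hu), abs_of_nonneg (mul_nonneg hqa.le hu)]
    exact mul_le_mul_of_nonneg_right hle hu
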